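/- Let D be a set with |D| ≥ 2, let a, c be distinct elements of D, let ⊣ be the operation on D given by a ⊣ a = a, a ⊣ y = c for y ≠ a, and x ⊣ y = x for x ≠ a, and let ⊢ be the dual operation x ⊢ y = y ⊣ x. Then (D,⊣,⊢) is an abelian dimonoid whose halo equals {a}, a bijection f : D → D is an automorphism of (D,⊣,⊢) if and only if f(a) = a and f(c) = c; moreover, if |D| ≥ 3, then (D,⊣,⊢) is not commutative. -/

import Mathlib

/-- A dimonoid: two associative operations `ld` (⊣) and `rd` (⊢) satisfying
axioms (D1), (D2), (D3). -/
def IsDimonoid {D : Type*} (ld rd : D → D → D) : Prop :=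
  (∀ x y z, ld (ld x y) z = ld x (ld y z)) ∧
  (∀ x y z, rd (rd x y) z = rd x (rd y z)) ∧
  (∀ x y z, ld (ld x y) z = ld x (rd y z)) ∧
  (∀ x y z, ld (rd x y) z = rd x (ld y z)) ∧
  (∀ x y z, rd (ld x y) z = rd x (rd y z))

/-- The automorphism group of a magma `(D, op)`, as a subgroup of `Equiv.Perm D`. -/
def semigroupAutGroup {D : Type*} (op : D → D → D) : Subgroup (Equiv.Perm D) where
  carrier := {f : Equiv.Perm D | ∀ x y, f (op x y) = op (f x) (f y)}
  one_mem' := fun _ _ => rfl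
  mul_mem' := by
    intro f g hf hg
    simp only [Set.mem_setOf_eq] at hf hg ⊢
    intro x y
    simp [Equiv.Perm.mul_apply, hg, hf]
  inv_mem' := by
    intro f hf
    simp only [Set.mem_setOf_eq] at hf ⊢
    intro x y
    apply f.injective
    rw [hf]
    simp

/-- The automorphism group of a dimonoid `(D, ld, rd)`. -/
def dimonoidAutGroup {D : Type*} (ld rd : D → D → D) : Subgroup (Equiv.Perm D) :=
  semigroupAutGroup ld ⊓ semigroupAutGroup rd

/-- The dimonoid `LOB_D ⋈ ROB_D` is an abelian dimonoid whose halo equals `{a}`;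
its automorphisms are exactly the bijections fixing `a` and `c`; and if
`|D| ≥ 3` it is not commutative. -/
theorem LOB_D_dimonoid {D : Type*} (a c : D) (hac : a ≠ c) (ld rd : D → D → D)
    (hld1 : ld a a = a)
    (hld2 : ∀ y, y ≠ a → ld a y = c)
    (hld3 : ∀ x y, x ≠ a → ld x y = x)
    (hrd : ∀ x y, rd x y = ld y x) :
    IsDimonoid ld rd ∧
    (∀ x y, ld x y = rd y x) ∧
    {e : D | ∀ d, rd e d = d ∧ ld d e = d} = {a} ∧
    (∀ f : Equiv.Perm D,
      ((∀ x y, f (ld x y) = ld (f x) (f y)) ∧ (∀ x y, f (rd x y) = rd (f x) (f y))) ↔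
      (f a = a ∧ f c = c)) ∧
    ((∃ x y z : D, x ≠ y ∧ y ≠ z ∧ x ≠ z) →
      ¬ ((∀ x y, ld x y = ld y x) ∧ (∀ x y, rd x y = rd y x))) := by
  classical
  have hca : c ≠ a := hac.symm
  have key : ∀ x y, ld x y = if x = a then (if y = a then a else c) else x := by
    intro x y
    by_cases hx : x = a
    · by_cases hy : y = a
      · simp [hx, hy, hld1]
      · simp [hx, hy, hld2 y hy]
    · simp [hx, hld3 x y hx]
  refine ⟨⟨?_, ?_, ?_, ?_, ?_⟩, ?_, ?_, ?_, ?_⟩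
  · intro x y z
    by_cases hx : x = a <;> by_cases hy : y = a <;> by_cases hz : z = a <;>
      simp [key, hx, hy, hz, hca]
  · intro x y z
    by_cases hx : x = a <;> by_cases hy : y = a <;> by_cases hz : z = a <;>
      simp [key, hrd, hx, hy, hz, hca]
  · intro x y z
    by_cases hx : x = a <;> by_cases hy : y = a <;> by_cases hz : z = a <;>
      simp [key, hrd, hx, hy, hz, hca]
  · intro x y z
    by_cases hx : x = a <;> by_cases hy : y = a <;> by_cases hz : z = a <;>
      simp [key, hrd, hx, hy, hz, hca]
  · intro x y z
    by_cases hx : x = a <;> by_cases hy : y = a <;> by_cases hz : z = a <;>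
      simp [key, hrd, hx, hy, hz, hca]
  · intro x y; rw [hrd]
  · ext e
    simp only [Set.mem_setOf_eq, Set.mem_singleton_iff]
    constructor
    · intro h
      by_contra he
      have h2 := (h a).2
      rw [hld2 e he] at h2
      exact hca h2
    · intro he d
      rw [he]
      constructor
      · rw [hrd]
        by_cases hd : d = a
        · rw [hd, hld1]
        · rw [hld3 d a hd]
      · by_cases hd : d = a
        · rw [hd, hld1]
        · rw [hld3 d a hd]
  · intro f
    constructor
    · rintro ⟨hf, -⟩
      have hfa : f a = a := by
        by_contra hfa
        set b := f.symm a with hb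
        have hfb : f b = a := f.apply_symm_apply a
        have hba : b ≠ a := by
          intro h; rw [h] at hfb; exact hfa hfb
        have h1 : f (ld a b) = ld (f a) (f b) := hf a b
        rw [hld2 b hba, hfb, hld3 (f a) a hfa] at h1
        exact hac (f.injective h1).symm
      have hfc : f c ≠ a := by
        intro h
        exact hca (f.injective (by rw [h, hfa]))
      have h1 : f (ld a c) = ld (f a) (f c) := hf a c
      rw [hld2 c hca, hfa, hld2 (f c) hfc] at h1
      exact ⟨hfa, h1⟩
    · rintro ⟨hfa, hfc⟩
      have hinj : ∀ x, x ≠ a → f x ≠ a := by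
        intro x hx h
        exact hx (f.injective (by rw [h, hfa]))
      have hld : ∀ x y, f (ld x y) = ld (f x) (f y) := by
        intro x y
        by_cases hx : x = a
        · by_cases hy : y = a
          · rw [hx, hy, hld1, hfa, hld1]
          · rw [hx, hld2 y hy, hfc, hfa, hld2 (f y) (hinj y hy)]
        · rw [hld3 x y hx, hld3 (f x) (f y) (hinj x hx)]
      exact ⟨hld, fun x y => by rw [hrd, hrd, hld]⟩
  · rintro ⟨x, y, z, hxy, hyz, hxz⟩ ⟨hcomm, -⟩
    have main : ∀ u v : D, u ≠ a → v ≠ a → u ≠ v → False := by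
      intro u v hu hv huv
      have := hcomm u v
      rw [hld3 u v hu, hld3 v u hv] at this
      exact huv this
    by_cases hx : x = a
    · exact main y z (hx ▸ Ne.symm hxy) (hx ▸ Ne.symm hxz) hyz
    · by_cases hy : y = a
      · exact main x z hx (fun h => hyz (hy.trans h.symm)) hxz
      · exact main x y hx hy hxy
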